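/- Let T ≥ 1 be an integer, (α_s)_{s=1}^T a real sequence, 0 < β_1 < β_2 ≤ 1 and ε > 0. Define ζ_s = Σ_{j=1}^s β_1^{s−j} α_j and θ_s = Σ_{j=1}^s β_2^{s−j} α_j². Then for every t ∈ [T]: Σ_{s=1}^t ζ_s²/(ε + θ_s) ≤ (1/((1−β_1)(1−β_1/β_2)))·( log(1 + θ_t/ε) − t·log β_2 ). -/

import Mathlib

private lemma logstep {a c : ℝ} (ha : 0 ≤ a) (hc : 0 < c) :
    a / (c + a) ≤ Real.log (c + a) - Real.log c := by
  have hca : 0 < c + a := by linarith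
  have h := Real.log_le_sub_one_of_pos (show (0:ℝ) < c / (c + a) by positivity)
  rw [Real.log_div hc.ne' hca.ne'] at h
  have e : c / (c + a) - 1 = -(a / (c + a)) := by field_simp; ring
  linarith

private lemma geom_bound {r : ℝ} (h0 : 0 ≤ r) (h1 : r < 1) (n : ℕ) :
    ∑ i ∈ Finset.range n, r ^ i ≤ 1 / (1 - r) := by
  rw [geom_sum_eq (by linarith : r ≠ 1)]
  have hr : (0:ℝ) < 1 - r := by linarith
  have e : (r ^ n - 1) / (r - 1) = (1 - r ^ n) / (1 - r) := by
    rw [div_eq_div_iff (by linarith) hr.ne']; ring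
  rw [e, div_le_div_iff₀ hr hr]
  nlinarith [pow_nonneg h0 n]

private lemma icc_to_range (f : ℕ → ℝ) (s : ℕ) :
    ∑ j ∈ Finset.Icc 1 s, f j = ∑ i ∈ Finset.range s, f (1 + i) := by
  rw [← Finset.Ico_add_one_right_eq_Icc, Finset.sum_Ico_eq_sum_range]
  simp

theorem stmt4 (T : ℕ) (hT : 1 ≤ T) (α : ℕ → ℝ)
    (β1 β2 : ℝ) (hβ1pos : 0 < β1) (hβ12 : β1 < β2) (hβ2le : β2 ≤ 1)
    (ε : ℝ) (hε : 0 < ε)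
    (ζ θ : ℕ → ℝ)
    (hζ : ∀ s, ζ s = ∑ j ∈ Finset.Icc 1 s, β1 ^ (s - j) * α j)
    (hθ : ∀ s, θ s = ∑ j ∈ Finset.Icc 1 s, β2 ^ (s - j) * (α j) ^ 2) :
    ∀ t ∈ Finset.Icc 1 T,
      ∑ s ∈ Finset.Icc 1 t, (ζ s) ^ 2 / (ε + θ s) ≤
        1 / ((1 - β1) * (1 - β1 / β2)) *
          (Real.log (1 + θ t / ε) - t * Real.log β2) := by
  intro t _
  have hβ2pos : (0:ℝ) < β2 := hβ1pos.trans hβ12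
  have hβ1lt1 : β1 < 1 := lt_of_lt_of_le hβ12 hβ2le
  have hr0 : (0:ℝ) ≤ β1 / β2 := by positivity
  have hr1 : β1 / β2 < 1 := (div_lt_one hβ2pos).2 hβ12
  have hθnn : ∀ s, 0 ≤ θ s := by
    intro s; rw [hθ]
    exact Finset.sum_nonneg fun j _ => by positivity
  have hpos : ∀ s, 0 < ε + θ s := fun s => by linarith [hθnn s]
  -- recursion for θ
  have hrec : ∀ s : ℕ, θ (s + 1) = β2 * θ s + α (s + 1) ^ 2 := by
    intro s
    rw [hθ, hθ, ← Finset.Ico_add_one_right_eq_Icc, ← Finset.Ico_add_one_right_eq_Icc,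
      Finset.sum_Ico_succ_top (by omega : 1 ≤ s + 1)]
    have : ∀ j ∈ Finset.Ico 1 (s + 1), β2 ^ (s + 1 - j) * α j ^ 2
        = β2 * (β2 ^ (s - j) * α j ^ 2) := by
      intro j hj
      simp only [Finset.mem_Ico] at hj
      have : s + 1 - j = (s - j) + 1 := by omega
      rw [this, pow_succ]; ring
    rw [Finset.sum_congr rfl this, ← Finset.mul_sum]
    simp
  -- monotonicity: ε + θ s ≥ β2^(s-j) (ε + θ j)
  have hmono : ∀ j s : ℕ, j ≤ s → β2 ^ (s - j) * (ε + θ j) ≤ ε + θ s := by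
    intro j s hjs
    induction s, hjs using Nat.le_induction with
    | base => simp
    | succ n hn ih =>
      have e : n + 1 - j = (n - j) + 1 := by omega
      rw [e, pow_succ]
      have h1 : β2 ^ (n - j) * β2 * (ε + θ j) = β2 * (β2 ^ (n - j) * (ε + θ j)) := by ring
      rw [h1]
      have h2 : β2 * (β2 ^ (n - j) * (ε + θ j)) ≤ β2 * (ε + θ n) :=
        mul_le_mul_of_nonneg_left ih hβ2pos.le
      have h3 : β2 * (ε + θ n) ≤ ε + θ (n + 1) := by
        rw [hrec n]
        nlinarith [sq_nonneg (α (n + 1)), hε]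
      linarith
  -- Cauchy–Schwarz bound on ζ s ^ 2
  have hcs : ∀ s : ℕ, (ζ s) ^ 2 ≤
      (1 / (1 - β1)) * ∑ j ∈ Finset.Icc 1 s, β1 ^ (s - j) * α j ^ 2 := by
    intro s
    have key := Finset.sum_mul_sq_le_sq_mul_sq (Finset.Icc 1 s)
      (fun j => Real.sqrt β1 ^ (s - j)) (fun j => Real.sqrt β1 ^ (s - j) * α j)
    have e1 : ∀ j ∈ Finset.Icc 1 s,
        (Real.sqrt β1 ^ (s - j)) * (Real.sqrt β1 ^ (s - j) * α j)
          = β1 ^ (s - j) * α j := by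
      intro j _
      rw [← mul_assoc, ← mul_pow, Real.mul_self_sqrt hβ1pos.le]
    have e2 : ∀ j ∈ Finset.Icc 1 s,
        (Real.sqrt β1 ^ (s - j)) ^ 2 = β1 ^ (s - j) := by
      intro j _
      rw [← pow_mul, mul_comm (s - j) 2, pow_mul, Real.sq_sqrt hβ1pos.le]
    have e3 : ∀ j ∈ Finset.Icc 1 s,
        (Real.sqrt β1 ^ (s - j) * α j) ^ 2 = β1 ^ (s - j) * α j ^ 2 := by
      intro j hj
      rw [mul_pow, e2 j hj]
    rw [Finset.sum_congr rfl e1, Finset.sum_congr rfl e2, Finset.sum_congr rfl e3] at key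
    rw [hζ]
    have hgeom : ∑ j ∈ Finset.Icc 1 s, β1 ^ (s - j) ≤ 1 / (1 - β1) := by
      rw [icc_to_range (fun j => β1 ^ (s - j)) s]
      have he : ∀ i ∈ Finset.range s, β1 ^ (s - (1 + i)) = β1 ^ (s - 1 - i) := by
        intro i _; congr 1; omega
      rw [Finset.sum_congr rfl he, Finset.sum_range_reflect (fun i => β1 ^ i) s]
      exact geom_bound hβ1pos.le hβ1lt1 s
    have hσnn : 0 ≤ ∑ j ∈ Finset.Icc 1 s, β1 ^ (s - j) * α j ^ 2 :=
      Finset.sum_nonneg fun j _ => by positivity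
    calc (∑ j ∈ Finset.Icc 1 s, β1 ^ (s - j) * α j) ^ 2
        ≤ (∑ j ∈ Finset.Icc 1 s, β1 ^ (s - j)) *
            ∑ j ∈ Finset.Icc 1 s, β1 ^ (s - j) * α j ^ 2 := key
      _ ≤ (1 / (1 - β1)) * ∑ j ∈ Finset.Icc 1 s, β1 ^ (s - j) * α j ^ 2 :=
          mul_le_mul_of_nonneg_right hgeom hσnn
  -- per-term bound after dividing
  have hK1 : (0:ℝ) < 1 / (1 - β1) := by
    have : (0:ℝ) < 1 - β1 := by linarith
    positivity
  set S := ∑ j ∈ Finset.Icc 1 t, α j ^ 2 / (ε + θ j) with hS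
  have main1 : ∑ s ∈ Finset.Icc 1 t, (ζ s) ^ 2 / (ε + θ s) ≤
      (1 / (1 - β1)) * (1 / (1 - β1 / β2)) * S := by
    have step1 : ∑ s ∈ Finset.Icc 1 t, (ζ s) ^ 2 / (ε + θ s) ≤
        (1 / (1 - β1)) * ∑ s ∈ Finset.Icc 1 t,
          ∑ j ∈ Finset.Icc 1 s, (β1 / β2) ^ (s - j) * (α j ^ 2 / (ε + θ j)) := by
      rw [Finset.mul_sum]
      apply Finset.sum_le_sum
      intro s _
      have hA : (ζ s) ^ 2 / (ε + θ s) ≤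
          (1 / (1 - β1)) * ∑ j ∈ Finset.Icc 1 s,
            β1 ^ (s - j) * α j ^ 2 / (ε + θ s) := by
        rw [← Finset.sum_div, ← mul_div_assoc]
        exact div_le_div_of_nonneg_right (hcs s) (hpos s).le
      refine hA.trans ?_
      apply mul_le_mul_of_nonneg_left ?_ hK1.le
      apply Finset.sum_le_sum
      intro j hj
      simp only [Finset.mem_Icc] at hj
      -- β1^(s-j) α j^2 / (ε+θ s) ≤ (β1/β2)^(s-j) * (α j^2/(ε+θ j))
      have hb2n : (0:ℝ) < β2 ^ (s - j) := by positivity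
      have key : β1 ^ (s - j) = (β1 / β2) ^ (s - j) * β2 ^ (s - j) := by
        rw [div_pow, div_mul_cancel₀]
        exact hb2n.ne'
      rw [key]
      have h1 : (β1 / β2) ^ (s - j) * β2 ^ (s - j) * α j ^ 2 / (ε + θ s)
          = (β1 / β2) ^ (s - j) * (β2 ^ (s - j) * α j ^ 2 / (ε + θ s)) := by ring
      rw [h1]
      apply mul_le_mul_of_nonneg_left ?_ (by positivity)
      rw [div_le_div_iff₀ (hpos s) (hpos j)]
      have := hmono j s hj.2
      nlinarith [sq_nonneg (α j), hpos j, hpos s]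
    refine step1.trans ?_
    rw [mul_assoc]
    apply mul_le_mul_of_nonneg_left ?_ hK1.le
    -- swap sums
    have hswap : ∑ s ∈ Finset.Icc 1 t, ∑ j ∈ Finset.Icc 1 s,
        (β1 / β2) ^ (s - j) * (α j ^ 2 / (ε + θ j))
        = ∑ j ∈ Finset.Icc 1 t, ∑ s ∈ Finset.Icc j t,
          (β1 / β2) ^ (s - j) * (α j ^ 2 / (ε + θ j)) := by
      apply Finset.sum_comm'
      intro s j
      simp only [Finset.mem_Icc]
      omega
    rw [hswap, hS, Finset.mul_sum]
    apply Finset.sum_le_sum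
    intro j hj
    simp only [Finset.mem_Icc] at hj
    rw [← Finset.sum_mul]
    apply mul_le_mul_of_nonneg_right ?_ (div_nonneg (sq_nonneg _) (hpos j).le)
    have e : ∑ s ∈ Finset.Icc j t, (β1 / β2) ^ (s - j)
        = ∑ i ∈ Finset.range (t + 1 - j), (β1 / β2) ^ i := by
      rw [← Finset.Ico_add_one_right_eq_Icc, Finset.sum_Ico_eq_sum_range]
      apply Finset.sum_congr rfl
      intro i _; congr 1; omega
    rw [e]
    exact geom_bound hr0 hr1 _
  -- step 4: S ≤ log(1 + θ t / ε) - t * log β2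
  have hθ0 : θ 0 = 0 := by rw [hθ]; simp
  have step4 : S ≤ Real.log (1 + θ t / ε) - t * Real.log β2 := by
    have hterm : ∀ j ∈ Finset.Icc 1 t, α j ^ 2 / (ε + θ j) ≤
        (Real.log (ε + θ j) - Real.log (ε + θ (j - 1))) - Real.log β2 := by
      intro j hj
      simp only [Finset.mem_Icc] at hj
      obtain ⟨k, rfl⟩ : ∃ k, j = k + 1 := ⟨j - 1, by omega⟩
      simp only [Nat.add_sub_cancel]
      set c : ℝ := ε + β2 * θ k with hc
      have hcpos : 0 < c := by nlinarith [hθnn k]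
      have hsum : ε + θ (k + 1) = c + α (k + 1) ^ 2 := by
        rw [hrec k, hc]; ring
      have h1 : α (k + 1) ^ 2 / (ε + θ (k + 1)) ≤
          Real.log (ε + θ (k + 1)) - Real.log c := by
        rw [hsum]; exact logstep (sq_nonneg _) hcpos
      have h2 : Real.log β2 + Real.log (ε + θ k) ≤ Real.log c := by
        rw [← Real.log_mul hβ2pos.ne' (hpos k).ne']
        apply Real.log_le_log (mul_pos hβ2pos (hpos k))
        rw [hc]; nlinarith [hθnn k, hε]
      linarith
    have hsum1 : S ≤ ∑ j ∈ Finset.Icc 1 t,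
        ((Real.log (ε + θ j) - Real.log (ε + θ (j - 1))) - Real.log β2) :=
      Finset.sum_le_sum hterm
    have htel : ∑ j ∈ Finset.Icc 1 t,
        (Real.log (ε + θ j) - Real.log (ε + θ (j - 1)))
        = Real.log (ε + θ t) - Real.log (ε + θ 0) := by
      rw [icc_to_range (fun j => Real.log (ε + θ j) - Real.log (ε + θ (j - 1))) t]
      have he : ∀ i ∈ Finset.range t,
          Real.log (ε + θ (1 + i)) - Real.log (ε + θ (1 + i - 1))
          = Real.log (ε + θ (i + 1)) - Real.log (ε + θ i) := by
        intro i _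
        rw [show 1 + i = i + 1 from by omega, show i + 1 - 1 = i from by omega]
      rw [Finset.sum_congr rfl he,
        Finset.sum_range_sub (fun i => Real.log (ε + θ i)) t]
    have hconst : ∑ _j ∈ Finset.Icc 1 t, Real.log β2 = t * Real.log β2 := by
      rw [Finset.sum_const, Nat.card_Icc]
      simp [nsmul_eq_mul]
    rw [Finset.sum_sub_distrib, htel, hconst] at hsum1
    have hfin : Real.log (ε + θ t) - Real.log (ε + θ 0)
        = Real.log (1 + θ t / ε) := by
      rw [hθ0, add_zero]
      rw [← Real.log_div (hpos t).ne' hε.ne']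
      congr 1
      field_simp
    linarith [hsum1, hfin ▸ hsum1]
  -- combine
  have hK : 1 / (1 - β1) * (1 / (1 - β1 / β2)) = 1 / ((1 - β1) * (1 - β1 / β2)) := by
    rw [div_mul_div_comm, one_mul]
  have hK2 : (0:ℝ) < 1 / (1 - β1 / β2) := by
    have : (0:ℝ) < 1 - β1 / β2 := by linarith
    positivity
  calc ∑ s ∈ Finset.Icc 1 t, (ζ s) ^ 2 / (ε + θ s)
      ≤ 1 / (1 - β1) * (1 / (1 - β1 / β2)) * S := main1
    _ ≤ 1 / (1 - β1) * (1 / (1 - β1 / β2)) *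
          (Real.log (1 + θ t / ε) - t * Real.log β2) :=
        mul_le_mul_of_nonneg_left step4 (by positivity)
    _ = 1 / ((1 - β1) * (1 - β1 / β2)) *
          (Real.log (1 + θ t / ε) - t * Real.log β2) := by rw [hK]
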